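/- Let q ≥ 1, λ ≥ 1/2 with 2λq ∈ ℕ, and let f : ℝ^d → [0,1]. Let s ∈ ℝ^d be random with each coordinate sᵢ marginally uniform on the finite set {k/q + 1/(2q) : 0 ≤ k ≤ 2λq - 1}, with arbitrary joint distribution. Define x̃ᵢ = (min(sᵢ,1) + 1_{xᵢ > sᵢ})/2 and p(x) = E_s[f(x̃)]. Then for all x, x' in the quantized cube {0, 1/q, ..., 1}^d, |p(x) - p(x')| ≤ ‖x - x'‖₁/(2λ). -/

import Mathlib

open MeasureTheory Set

/-- Discrete uniform probability measure on `{k/q + 1/(2q) : 0 ≤ k ≤ m-1}`. -/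
noncomputable def discUnif (q m : ℕ) : Measure ℝ :=
  (m : ENNReal)⁻¹ • ∑ k ∈ Finset.range m, Measure.dirac ((k : ℝ) / q + 1 / (2 * q))

open scoped Classical

lemma discUnif_apply (q m : ℕ) (A : Set ℝ) (hA : MeasurableSet A) :
    discUnif q m A = (m : ENNReal)⁻¹ *
      ∑ k ∈ Finset.range m, A.indicator (fun _ => (1:ENNReal)) ((k : ℝ) / q + 1 / (2 * q)) := by
  simp only [discUnif, Measure.smul_apply, Measure.coe_finset_sum, Finset.sum_apply,
    smul_eq_mul]
  congr 1
  exact Finset.sum_congr rfl (fun k _ => Measure.dirac_apply' _ hA)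

lemma discUnif_Ico (q m : ℕ) (hq : 1 ≤ q) (a b : ℕ) (hab : a ≤ b) (hbm : b ≤ m) :
    discUnif q m (Ico ((a:ℝ)/q) ((b:ℝ)/q)) = ((b - a : ℕ) : ENNReal) / m := by
  rw [discUnif_apply _ _ _ measurableSet_Ico]
  have hq0 : (0:ℝ) < q := by exact_mod_cast hq
  have hpt : ∀ k : ℕ, (k:ℝ)/q + 1/(2*q) = ((k:ℝ) + 1/2)/q := by
    intro k; field_simp
  have hmem : ∀ k : ℕ, (((k : ℝ) / q + 1 / (2 * q)) ∈ Ico ((a:ℝ)/q) ((b:ℝ)/q)) ↔ (a ≤ k ∧ k < b) := by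
    intro k
    rw [hpt k, mem_Ico, div_le_div_iff_of_pos_right hq0, div_lt_div_iff_of_pos_right hq0]
    constructor
    · rintro ⟨h1, h2⟩
      constructor
      · have : (a:ℝ) < k + 1 := by linarith
        exact Nat.lt_succ_iff.mp (by exact_mod_cast this)
      · have : (k:ℝ) < b := by linarith
        exact_mod_cast this
    · rintro ⟨h1, h2⟩
      have h1' : (a:ℝ) ≤ k := by exact_mod_cast h1
      have h2' : (k:ℝ) + 1 ≤ b := by exact_mod_cast h2
      constructor <;> linarith
  have hsum : ∑ k ∈ Finset.range m,
      (Ico ((a:ℝ)/q) ((b:ℝ)/q)).indicator (fun _ => (1:ENNReal)) ((k : ℝ) / q + 1 / (2 * q))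
      = ∑ k ∈ Finset.range m, (if a ≤ k ∧ k < b then (1:ENNReal) else 0) := by
    refine Finset.sum_congr rfl (fun k _ => ?_)
    by_cases h : a ≤ k ∧ k < b
    · rw [Set.indicator_of_mem ((hmem k).mpr h), if_pos h]
    · rw [Set.indicator_of_notMem (fun hc => h ((hmem k).mp hc)), if_neg h]
  have hfe : (Finset.range m).filter (fun k : ℕ => a ≤ k ∧ k < b) = Finset.Ico a b := by
    ext k
    simp only [Finset.mem_filter, Finset.mem_range, Finset.mem_Ico]
    omega
  rw [hsum, ← Finset.sum_filter, hfe, Finset.sum_const, Nat.card_Ico]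
  simp [ENNReal.div_eq_inv_mul]

lemma ssn_ae_supp {d q m : ℕ} (μ : Measure (Fin d → ℝ)) [IsProbabilityMeasure μ]
    (hmarg : ∀ i, μ.map (fun s => s i) = discUnif q m) :
    ∀ᵐ s ∂μ, ∀ i, s i ∈ (Finset.range m).image (fun k : ℕ => (k:ℝ)/q + 1/(2*q)) := by
  set T : Finset ℝ := (Finset.range m).image (fun k : ℕ => (k:ℝ)/q + 1/(2*q)) with hT
  have hnull : μ (⋃ i, (fun s : Fin d → ℝ => s i) ⁻¹' (↑T)ᶜ) = 0 := by
    refine measure_iUnion_null (fun i => ?_)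
    have hmeas : Measurable fun s : Fin d → ℝ => s i := measurable_pi_apply i
    rw [← Measure.map_apply hmeas T.measurableSet.compl, hmarg i,
      discUnif_apply _ _ _ T.measurableSet.compl]
    have : ∑ k ∈ Finset.range m,
        ((↑T)ᶜ : Set ℝ).indicator (fun _ => (1:ENNReal)) ((k : ℝ) / q + 1 / (2 * q)) = 0 := by
      refine Finset.sum_eq_zero (fun k hk => ?_)
      refine Set.indicator_of_notMem ?_ _
      simp only [mem_compl_iff, not_not, Finset.coe_image, Set.mem_image, hT]
      exact ⟨k, by simpa using hk, rfl⟩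
    rw [this, mul_zero]
  rw [ae_iff]
  refine measure_mono_null (fun s hs => ?_) hnull
  simp only [mem_setOf_eq, not_forall] at hs
  obtain ⟨i, hi⟩ := hs
  exact mem_iUnion.mpr ⟨i, hi⟩

lemma ssn_integrable {d q m : ℕ} (μ : Measure (Fin d → ℝ)) [IsProbabilityMeasure μ]
    (hmarg : ∀ i, μ.map (fun s => s i) = discUnif q m)
    (G : (Fin d → ℝ) → ℝ) (hG : ∀ s, |G s| ≤ 1) : Integrable G μ := by
  set T : Finset ℝ := (Finset.range m).image (fun k : ℕ => (k:ℝ)/q + 1/(2*q)) with hT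
  set S : Finset (Fin d → ℝ) := Fintype.piFinset (fun _ => T) with hS
  set G' : (Fin d → ℝ) → ℝ := fun s => ∑ a ∈ S, if s = a then G a else 0 with hG'
  have hmeasG' : Measurable G' := by
    refine Finset.measurable_sum _ (fun a _ => ?_)
    refine Measurable.ite ?_ measurable_const measurable_const
    exact measurableSet_eq
  have heq : G =ᵐ[μ] G' := by
    filter_upwards [ssn_ae_supp μ hmarg] with s hs
    have hsS : s ∈ S := by
      rw [hS, Fintype.mem_piFinset]
      exact hs
    show G s = ∑ a ∈ S, if s = a then G a else 0
    rw [Finset.sum_ite_eq S s (fun a => G a), if_pos hsS]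
  refine Integrable.mono' (integrable_const (1:ℝ))
    (hmeasG'.aestronglyMeasurable.congr heq.symm) ?_
  exact Filter.Eventually.of_forall (fun s => by rw [Real.norm_eq_abs]; exact hG s)

lemma ssn_key (d q : ℕ) (hq : 1 ≤ q) (lam : ℝ) (hlam : 1/2 ≤ lam)
    (m : ℕ) (hm : (m : ℝ) = 2 * lam * q)
    (f : (Fin d → ℝ) → ℝ) (hf : ∀ y, f y ∈ Icc (0:ℝ) 1)
    (μ : Measure (Fin d → ℝ)) [IsProbabilityMeasure μ]
    (hmarg : ∀ i, μ.map (fun s => s i) = discUnif q m)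
    (z z' : Fin d → ℝ) (i : Fin d) (hzz : ∀ j, j ≠ i → z j = z' j)
    (a b : ℕ) (ha : z i = (a:ℝ)/q) (hb : z' i = (b:ℝ)/q) (hab : a ≤ b) (hbq : b ≤ q) :
    |(∫ s, f (fun j => (min (s j) 1 + (if s j < z j then (1:ℝ) else 0)) / 2) ∂μ) -
     (∫ s, f (fun j => (min (s j) 1 + (if s j < z' j then (1:ℝ) else 0)) / 2) ∂μ)|
      ≤ |z i - z' i| / (2 * lam) := by
  have hq0 : (0:ℝ) < q := by exact_mod_cast hq
  have hlam0 : (0:ℝ) < lam := by linarith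
  have hm0 : (0:ℝ) < m := by rw [hm]; positivity
  have hqm : (q:ℝ) ≤ m := by rw [hm]; nlinarith
  have hbm : b ≤ m := by
    have : (b:ℝ) ≤ m := le_trans (by exact_mod_cast hbq) hqm
    exact_mod_cast this
  set F : (Fin d → ℝ) → (Fin d → ℝ) → ℝ :=
    fun w s => f (fun j => (min (s j) 1 + (if s j < w j then (1:ℝ) else 0)) / 2) with hF
  have hFbd : ∀ w s, |F w s| ≤ 1 := by
    intro w s
    rcases hf (fun j => (min (s j) 1 + (if s j < w j then (1:ℝ) else 0)) / 2) with ⟨h0, h1⟩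
    rw [abs_le]; constructor <;> [linarith; exact h1]
  have hint1 : Integrable (F z) μ := ssn_integrable μ hmarg _ (hFbd z)
  have hint2 : Integrable (F z') μ := ssn_integrable μ hmarg _ (hFbd z')
  set G : Set (Fin d → ℝ) := (fun s => s i) ⁻¹' Ico ((a:ℝ)/q) ((b:ℝ)/q) with hG
  have hGmeas : MeasurableSet G := (measurable_pi_apply i) measurableSet_Ico
  have hindint : Integrable (G.indicator (fun _ => (1:ℝ))) μ := by
    refine ssn_integrable μ hmarg _ (fun s => ?_)
    by_cases h : s ∈ G
    · rw [Set.indicator_of_mem h]; norm_num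
    · rw [Set.indicator_of_notMem h]; norm_num
  have hptwise : ∀ s, |F z s - F z' s| ≤ G.indicator (fun _ => (1:ℝ)) s := by
    intro s
    by_cases h : s ∈ G
    · rw [Set.indicator_of_mem h]
      obtain ⟨h10, h11⟩ : F z s ∈ Icc (0:ℝ) 1 := hf _
      obtain ⟨h20, h21⟩ : F z' s ∈ Icc (0:ℝ) 1 := hf _
      rw [abs_le]
      constructor <;> linarith
    · rw [Set.indicator_of_notMem h]
      have hiff : (s i < z i ↔ s i < z' i) := by
        rw [hG, mem_preimage, mem_Ico, not_and_or, not_le, not_lt] at h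
        rw [ha, hb]
        have hab' : (a:ℝ) ≤ b := by exact_mod_cast hab
        have habq : (a:ℝ)/q ≤ (b:ℝ)/q := by gcongr
        rcases h with h | h
        · exact ⟨fun _ => by linarith, fun _ => h⟩
        · exact ⟨fun hc => by linarith, fun hc => by linarith⟩
      have harg : (fun j => (min (s j) 1 + (if s j < z j then (1:ℝ) else 0)) / 2)
          = (fun j => (min (s j) 1 + (if s j < z' j then (1:ℝ) else 0)) / 2) := by
        funext j
        by_cases hj : j = i
        · subst hj
          rw [if_congr hiff rfl rfl]
        · rw [hzz j hj]
      have : F z s = F z' s := congrArg f harg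
      rw [this, sub_self, abs_zero]
  have hmG : (μ G).toReal = ((b - a : ℕ) : ℝ) / m := by
    have : μ G = discUnif q m (Ico ((a:ℝ)/q) ((b:ℝ)/q)) := by
      rw [hG, ← Measure.map_apply (measurable_pi_apply i) measurableSet_Ico, hmarg i]
    rw [this, discUnif_Ico q m hq a b hab hbm, ENNReal.toReal_div,
      ENNReal.toReal_natCast, ENNReal.toReal_natCast]
  calc |(∫ s, F z s ∂μ) - (∫ s, F z' s ∂μ)|
      = |∫ s, (F z s - F z' s) ∂μ| := by rw [integral_sub hint1 hint2]
    _ ≤ ∫ s, |F z s - F z' s| ∂μ := by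
        simpa [Real.norm_eq_abs] using
          norm_integral_le_integral_norm (μ := μ) (fun s => F z s - F z' s)
    _ ≤ ∫ s, G.indicator (fun _ => (1:ℝ)) s ∂μ :=
        integral_mono (hint1.sub hint2).abs hindint hptwise
    _ = (μ G).toReal := by rw [integral_indicator_const _ hGmeas]; simp [Measure.real]
    _ = ((b - a : ℕ) : ℝ) / m := hmG
    _ = |z i - z' i| / (2 * lam) := by
        rw [ha, hb, hm]
        have h1 : |(a:ℝ)/q - (b:ℝ)/q| = ((b:ℝ) - a)/q := by
          rw [abs_sub_comm, abs_of_nonneg]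
          · rw [div_sub_div_same]
          · have : (a:ℝ) ≤ b := by exact_mod_cast hab
            have : (a:ℝ)/q ≤ (b:ℝ)/q := by gcongr
            linarith
        rw [h1, Nat.cast_sub hab, div_div]
        ring

/-- Quantized SSN: smoothing with splitting noise whose coordinates are marginally uniform
on the half-steps (arbitrary joint distribution) is `1/(2λ)`-Lipschitz w.r.t. the ℓ1 norm
on the quantized cube `{0, 1/q, ..., 1}^d`. -/
theorem quantized_ssn_lipschitz (d q : ℕ) (hq : 1 ≤ q) (lam : ℝ) (hlam : 1/2 ≤ lam)
    (m : ℕ) (hm : (m : ℝ) = 2 * lam * q)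
    (f : (Fin d → ℝ) → ℝ) (hf : ∀ y, f y ∈ Icc (0:ℝ) 1)
    (μ : Measure (Fin d → ℝ)) [IsProbabilityMeasure μ]
    (hmarg : ∀ i, μ.map (fun s => s i) = discUnif q m)
    (p : (Fin d → ℝ) → ℝ)
    (hp : ∀ x, p x = ∫ s, f (fun i => (min (s i) 1 + (if s i < x i then (1:ℝ) else 0)) / 2) ∂μ) :
    ∀ x x' : Fin d → ℝ,
      (∀ i, ∃ k : ℕ, k ≤ q ∧ x i = (k : ℝ) / q) →
      (∀ i, ∃ k : ℕ, k ≤ q ∧ x' i = (k : ℝ) / q) →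
      |p x - p x'| ≤ (∑ i, |x i - x' i|) / (2 * lam) := by
  intro x x' hx hx'
  have single : ∀ (z z' : Fin d → ℝ) (i : Fin d), (∀ j, j ≠ i → z j = z' j) →
      (∃ k : ℕ, k ≤ q ∧ z i = (k:ℝ)/q) → (∃ k : ℕ, k ≤ q ∧ z' i = (k:ℝ)/q) →
      |p z - p z'| ≤ |z i - z' i| / (2*lam) := by
    rintro z z' i hzz ⟨a, haq, ha⟩ ⟨b, hbq, hb⟩
    rcases le_total a b with hab | hab
    · rw [hp z, hp z']
      exact ssn_key d q hq lam hlam m hm f hf μ hmarg z z' i hzz a b ha hb hab hbq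
    · rw [abs_sub_comm, abs_sub_comm (z i), hp z, hp z']
      exact ssn_key d q hq lam hlam m hm f hf μ hmarg z' z i
        (fun j hj => (hzz j hj).symm) b a hb ha hab haq
  have main : ∀ A : Finset (Fin d),
      |p x - p (fun j => if j ∈ A then x' j else x j)|
        ≤ (∑ i ∈ A, |x i - x' i|) / (2*lam) := by
    intro A
    induction A using Finset.induction_on with
    | empty => simp
    | @insert i A hi ih =>
      set y : Fin d → ℝ := fun j => if j ∈ A then x' j else x j with hy
      set y' : Fin d → ℝ := fun j => if j ∈ insert i A then x' j else x j with hy'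
      have hdiff : ∀ j, j ≠ i → y j = y' j := by
        intro j hj
        simp only [hy, hy', Finset.mem_insert, hj, false_or]
      have hyi : y i = x i := by simp only [hy, if_neg hi]
      have hy'i : y' i = x' i := by simp only [hy', Finset.mem_insert, true_or, if_pos]
      have hstep : |p y - p y'| ≤ |y i - y' i| / (2*lam) := by
        refine single y y' i hdiff ?_ ?_
        · rw [hyi]; exact hx i
        · rw [hy'i]; exact hx' i
      calc |p x - p y'| ≤ |p x - p y| + |p y - p y'| := abs_sub_le _ _ _
        _ ≤ (∑ j ∈ A, |x j - x' j|)/(2*lam) + |y i - y' i|/(2*lam) := add_le_add ih hstep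
        _ = (∑ j ∈ insert i A, |x j - x' j|)/(2*lam) := by
            rw [hyi, hy'i, Finset.sum_insert hi, add_div]
            ring
  have hfin := main Finset.univ
  have hyu : (fun j => if j ∈ (Finset.univ : Finset (Fin d)) then x' j else x j) = x' := by
    funext j; simp
  rw [hyu] at hfin
  exact hfin
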